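/- Let A be an n×n real matrix and suppose the map Ĉ(X) = X + (AX)^{*3} from ℝⁿ to ℝⁿ is not proper. Then there exists an unbounded sequence (U_i) with each U_i ∈ Im(AAᵀ) such that the sequence (U_i + A(U_i^{*3})) is bounded; in other words, the map X ↦ X + A(X^{*3}) is not proper on Im(AAᵀ). -/
import Mathlib

lemma range_eq_range_self_mul_transpose {n : ℕ} (A : Matrix (Fin n) (Fin n) ℝ) :
    LinearMap.range (A * A.transpose).mulVecLin = LinearMap.range A.mulVecLin := by
  apply Submodule.eq_of_le_of_finrank_le
  · rintro x ⟨z, rfl⟩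
    exact ⟨A.transpose.mulVec z, by rw [Matrix.mulVecLin_apply, Matrix.mulVecLin_apply, Matrix.mulVec_mulVec]⟩
  · have h := Matrix.rank_self_mul_transpose A
    simpa [Matrix.rank] using h.ge

lemma mem_range_AAT {n : ℕ} (A : Matrix (Fin n) (Fin n) ℝ) (x : Fin n → ℝ) :
    A.mulVec x ∈ Set.range (A * A.transpose).mulVec := by
  have : A.mulVec x ∈ LinearMap.range (A * A.transpose).mulVecLin := by
    rw [range_eq_range_self_mul_transpose]
    exact ⟨x, rfl⟩
  obtain ⟨z, hz⟩ := this
  exact ⟨z, hz⟩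

/-- If the cubic-linear map `Ĉ(X) = X + (AX)^{*3}` on `ℝⁿ` is not proper, then there is an
unbounded sequence `(U_i)` in `Im(AAᵀ)` such that `(U_i + A(U_i^{*3}))` is bounded, i.e.
`X ↦ X + A(X^{*3})` is not proper on `Im(AAᵀ)`. -/
theorem not_proper_gives_unbounded_seq_on_range (n : ℕ) (A : Matrix (Fin n) (Fin n) ℝ)
    (hnp : ¬ ∀ C : Set (Fin n → ℝ), IsCompact C →
      IsCompact ((fun X : Fin n → ℝ => fun i => X i + (A.mulVec X i) ^ 3) ⁻¹' C)) :
    ∃ U : ℕ → Fin n → ℝ,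
      (∀ i, U i ∈ Set.range (A * A.transpose).mulVec) ∧
      ¬ Bornology.IsBounded (Set.range U) ∧
      Bornology.IsBounded
        (Set.range fun i => U i + A.mulVec fun k => (U i k) ^ 3) := by
  push_neg at hnp
  obtain ⟨C, hC, hpre⟩ := hnp
  set f : (Fin n → ℝ) → Fin n → ℝ :=
    fun X => fun i => X i + (A.mulVec X i) ^ 3 with hf
  have hfc : Continuous f := by
    apply continuous_pi
    intro i
    have h1 : Continuous fun X : Fin n → ℝ => A.mulVec X i :=
      (continuous_apply i).comp (A.mulVecLin.continuous_of_finiteDimensional)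
    exact (continuous_apply i).add (h1.pow 3)
  have hclosed : IsClosed (f ⁻¹' C) := hC.isClosed.preimage hfc
  have hub : ¬ Bornology.IsBounded (f ⁻¹' C) := by
    intro hb
    exact hpre (Metric.isCompact_of_isClosed_isBounded hclosed hb)
  -- extract sequence with norms > i
  have hseq : ∀ i : ℕ, ∃ x ∈ f ⁻¹' C, (i : ℝ) < ‖x‖ := by
    intro i
    by_contra h
    push_neg at h
    exact hub (isBounded_iff_forall_norm_le.2 ⟨i, h⟩)
  choose X hXC hXn using hseq
  refine ⟨fun i => A.mulVec (X i), fun i => mem_range_AAT A (X i), ?_, ?_⟩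
  · -- unboundedness
    intro hb
    set U : ℕ → Fin n → ℝ := fun i => A.mulVec (X i) with hU
    obtain ⟨r, hr⟩ := isBounded_iff_forall_norm_le.1 hb
    obtain ⟨s, hs⟩ := isBounded_iff_forall_norm_le.1 hC.isBounded
    -- X i = f (X i) - (U i)^{*3}, so bounded
    have hbX : ∀ i, ‖X i‖ ≤ s + |r| ^ 3 := by
      intro i
      have h1 : ‖f (X i)‖ ≤ s := hs _ (hXC i)
      have h2 : ∀ k, |X i k| ≤ s + |r| ^ 3 := by
        intro k
        have hUk : |U i k| ≤ r := (abs_le.2 ⟨neg_le_of_abs_le ?_, le_of_abs_le ?_⟩)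
        · have : X i k = f (X i) k - (U i k) ^ 3 := by simp [hf, hU]
          rw [this]
          calc |f (X i) k - (U i k) ^ 3| ≤ |f (X i) k| + |(U i k) ^ 3| := abs_sub _ _
            _ ≤ s + |r| ^ 3 := by
                have := norm_le_pi_norm (f (X i)) k
                have hk : |f (X i) k| ≤ s := le_trans this h1
                have : |(U i k) ^ 3| ≤ |r| ^ 3 := by
                  rw [abs_pow]
                  exact pow_le_pow_left₀ (abs_nonneg _) (le_trans hUk (le_abs_self r)) 3
                linarith
        · exact le_trans (norm_le_pi_norm (U i) k) (hr _ ⟨i, rfl⟩)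
        · exact le_trans (norm_le_pi_norm (U i) k) (hr _ ⟨i, rfl⟩)
      have hnn : (0:ℝ) ≤ s + |r| ^ 3 := by
        have : (0:ℝ) ≤ s := le_trans (norm_nonneg _) (hs _ (hXC 0))
        positivity
      exact pi_norm_le_iff_of_nonneg hnn |>.2 h2
    obtain ⟨i, hi⟩ := exists_nat_gt (s + |r| ^ 3)
    exact absurd (hbX i) (not_le.2 (lt_trans hi (hXn i)))
  · -- boundedness of U i + A (U_i)^{*3} = A (f (X i))
    have key : ∀ i, A.mulVec (X i) + A.mulVec (fun k => (A.mulVec (X i) k) ^ 3)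
        = A.mulVec (f (X i)) := by
      intro i
      rw [← Matrix.mulVec_add]
      congr 1
    have : (Set.range fun i => A.mulVec (X i) + A.mulVec fun k => (A.mulVec (X i) k) ^ 3)
        ⊆ A.mulVec '' C := by
      rintro _ ⟨i, rfl⟩
      dsimp only
      rw [key i]
      exact ⟨f (X i), hXC i, rfl⟩
    exact ((hC.image (A.mulVecLin.continuous_of_finiteDimensional)).isBounded).subset this
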